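/- Let 0 < b < Λ and suppose (μ/σ)·(T_max/T_min)^{σ−1}·(Λ+b)/(Λ−b) < 1. Let λ ∈ L¹(Ω) satisfy Λ − b ≤ ‖λ‖_{L¹} ≤ Λ + b, and let W ∈ C_{0+}(Ω) be a solution of the wage fixed-point equation for λ. Then ‖W‖_∞ ≤ [(μ/σ)(T_max/T_min)^{σ−1}·Φ/(Λ−b)] / [1 − (μ/σ)(T_max/T_min)^{σ−1}(Λ+b)/(Λ−b)]. -/

import Mathlib

open MeasureTheory Real Set

/-- The price index operator `G[λ](x) = [(1/F) ∫_Ω |λ(y)| T(x,y)^{1-σ} dy]^{1/(1-σ)}`. -/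
noncomputable def priceIndex {n : ℕ} (Ω : Set (Fin n → ℝ)) (F σ : ℝ)
    (T : (Fin n → ℝ) → (Fin n → ℝ) → ℝ) (lam : (Fin n → ℝ) → ℝ)
    (x : Fin n → ℝ) : ℝ :=
  ((1 / F) * ∫ y in Ω, |lam y| * T x y ^ (1 - σ)) ^ (1 / (1 - σ))

/-- `W` is a nonnegative continuous solution on `Ω` of the wage fixed-point equation for `lam`. -/
def IsWageSolution {n : ℕ} (Ω : Set (Fin n → ℝ)) (F σ μ : ℝ)
    (T : (Fin n → ℝ) → (Fin n → ℝ) → ℝ) (φ lam W : (Fin n → ℝ) → ℝ) : Prop :=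
  ContinuousOn W Ω ∧ (∀ x ∈ Ω, 0 ≤ W x) ∧
  ∀ x ∈ Ω, W x = (μ / (σ * F)) *
    ∫ y in Ω, (W y * |lam y| + φ y) * priceIndex Ω F σ T lam y ^ (σ - 1) * T x y ^ (1 - σ)

/-- Sup norm of `f` over the region `Ω`. -/
noncomputable def supNormOn {n : ℕ} (Ω : Set (Fin n → ℝ)) (f : (Fin n → ℝ) → ℝ) : ℝ :=
  sSup ((fun x => |f x|) '' Ω)

theorem wage_solution_bound {n : ℕ} (Ω : Set (Fin n → ℝ))
    (hΩc : IsCompact Ω) (hΩpos : 0 < volume Ω)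
    (T : (Fin n → ℝ) → (Fin n → ℝ) → ℝ)
    (hTcont : ContinuousOn (fun p : (Fin n → ℝ) × (Fin n → ℝ) => T p.1 p.2) (Ω ×ˢ Ω))
    (Tmin Tmax : ℝ) (hTmin : 1 ≤ Tmin)
    (hT : ∀ x ∈ Ω, ∀ y ∈ Ω, T x y ∈ Icc Tmin Tmax)
    (σ μ F Λ Φ : ℝ) (hσ : 1 < σ) (hμ : μ ∈ Ioo (0 : ℝ) 1) (hF : 0 < F)
    (hΛ : 0 < Λ) (hΦ : 0 < Φ)
    (φ : (Fin n → ℝ) → ℝ) (hφint : IntegrableOn φ Ω)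
    (hφ0 : ∀ᵐ x ∂(volume.restrict Ω), 0 ≤ φ x) (hφΦ : (∫ x in Ω, φ x) = Φ)
    (b : ℝ) (hb : 0 < b) (hbΛ : b < Λ)
    (hcond : μ / σ * (Tmax / Tmin) ^ (σ - 1) * ((Λ + b) / (Λ - b)) < 1)
    (lam : (Fin n → ℝ) → ℝ) (hlam : IntegrableOn lam Ω)
    (h₁ : Λ - b ≤ ∫ x in Ω, |lam x|) (h₂ : (∫ x in Ω, |lam x|) ≤ Λ + b)
    (W : (Fin n → ℝ) → ℝ) (hW : IsWageSolution Ω F σ μ T φ lam W) :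
    supNormOn Ω W ≤
      (μ / σ * (Tmax / Tmin) ^ (σ - 1) * (Φ / (Λ - b))) /
        (1 - μ / σ * (Tmax / Tmin) ^ (σ - 1) * ((Λ + b) / (Λ - b))) := by
  obtain ⟨hWc, hW0, hWeq⟩ := hW
  have hΩne : Ω.Nonempty := by
    rcases Set.eq_empty_or_nonempty Ω with h | h
    · simp [h] at hΩpos
    · exact h
  have hΩm : MeasurableSet Ω := hΩc.isClosed.measurableSet
  obtain ⟨z₀, hz₀⟩ := hΩne
  have hTminpos : (0:ℝ) < Tmin := lt_of_lt_of_le one_pos hTmin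
  have hTmm : Tmin ≤ Tmax := le_trans (hT z₀ hz₀ z₀ hz₀).1 (hT z₀ hz₀ z₀ hz₀).2
  have hTmaxpos : (0:ℝ) < Tmax := lt_of_lt_of_le hTminpos hTmm
  have hσ0 : (0:ℝ) < σ := lt_trans one_pos hσ
  have hσ' : (1:ℝ) - σ ≤ 0 := by linarith
  have hΛb : (0:ℝ) < Λ - b := by linarith
  have hΛb' : (0:ℝ) < Λ + b := by linarith
  set κ : ℝ := μ / σ * (Tmax / Tmin) ^ (σ - 1) with hκdef
  have hκpos : 0 < κ := by
    apply mul_pos (div_pos hμ.1 hσ0)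
    exact Real.rpow_pos_of_pos (div_pos hTmaxpos hTminpos) _
  set M : ℝ := supNormOn Ω W with hMdef
  -- sup attained
  have himc : IsCompact ((fun x => |W x|) '' Ω) := hΩc.image_of_continuousOn hWc.abs
  have himne : ((fun x => |W x|) '' Ω).Nonempty := ⟨_, ⟨z₀, hz₀, rfl⟩⟩
  have hMmem : M ∈ (fun x => |W x|) '' Ω := himc.sSup_mem himne
  obtain ⟨x₀, hx₀, hWx₀⟩ := hMmem
  have hMeq : W x₀ = M := by simpa [abs_of_nonneg (hW0 _ hx₀)] using hWx₀
  have hbdd : BddAbove ((fun x => |W x|) '' Ω) := himc.bddAbove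
  have hWle : ∀ y ∈ Ω, W y ≤ M := fun y hy =>
    (le_abs_self _).trans (le_csSup hbdd ⟨y, hy, rfl⟩)
  have hM0 : 0 ≤ M := hMeq ▸ hW0 _ hx₀
  have hlam1 : IntegrableOn (fun z => |lam z|) Ω := hlam.abs
  -- continuity of T slices
  have hTy : ∀ y ∈ Ω, ContinuousOn (fun z => T y z) Ω := by
    intro y hy
    exact hTcont.comp ((continuous_const.prodMk continuous_id).continuousOn)
      (fun z hz => ⟨hy, hz⟩)
  have hTyr : ∀ y ∈ Ω, ContinuousOn (fun z => T y z ^ (1 - σ)) Ω := by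
    intro y hy
    exact (hTy y hy).rpow_const (fun z hz =>
      Or.inl (ne_of_gt (lt_of_lt_of_le hTminpos (hT y hy z hz).1)))
  -- rpow bounds for T
  have hTub : ∀ x ∈ Ω, ∀ y ∈ Ω, T x y ^ (1 - σ) ≤ Tmin ^ (1 - σ) := fun x hx y hy =>
    Real.rpow_le_rpow_of_nonpos hTminpos (hT x hx y hy).1 hσ'
  have hTlb : ∀ x ∈ Ω, ∀ y ∈ Ω, Tmax ^ (1 - σ) ≤ T x y ^ (1 - σ) := fun x hx y hy =>
    Real.rpow_le_rpow_of_nonpos (lt_of_lt_of_le hTminpos (hT x hx y hy).1)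
      (hT x hx y hy).2 hσ'
  have hTone : ∀ x ∈ Ω, ∀ y ∈ Ω, T x y ^ (1 - σ) ≤ 1 := fun x hx y hy =>
    Real.rpow_le_one_of_one_le_of_nonpos (le_trans hTmin (hT x hx y hy).1) hσ'
  have hTpos' : ∀ x ∈ Ω, ∀ y ∈ Ω, (0:ℝ) ≤ T x y ^ (1 - σ) := fun x hx y hy =>
    Real.rpow_nonneg (le_trans hTminpos.le (hT x hx y hy).1) _
  -- integrability of z ↦ |lam z| * T y z ^ (1-σ)
  have hint1 : ∀ y ∈ Ω, IntegrableOn (fun z => |lam z| * T y z ^ (1 - σ)) Ω := by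
    intro y hy
    refine Integrable.mono hlam1
      (hlam1.aestronglyMeasurable.mul ((hTyr y hy).aestronglyMeasurable hΩm)) ?_
    filter_upwards [ae_restrict_mem hΩm] with z hz
    rw [Real.norm_eq_abs, Real.norm_eq_abs, abs_abs, abs_mul, abs_abs,
      abs_of_nonneg (hTpos' y hy z hz)]
    calc |lam z| * T y z ^ (1 - σ) ≤ |lam z| * 1 :=
          mul_le_mul_of_nonneg_left (hTone y hy z hz) (abs_nonneg _)
      _ = |lam z| := mul_one _
  -- lower bound on A y := ∫ |lam z| * T y z^{1-σ}
  have hA : ∀ y ∈ Ω, Tmax ^ (1 - σ) * (Λ - b) ≤ ∫ z in Ω, |lam z| * T y z ^ (1 - σ) := by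
    intro y hy
    have h1 : ∫ z in Ω, Tmax ^ (1 - σ) * |lam z| ≤ ∫ z in Ω, |lam z| * T y z ^ (1 - σ) := by
      refine integral_mono_of_nonneg ?_ (hint1 y hy) ?_
      · filter_upwards with z
        exact mul_nonneg (Real.rpow_nonneg hTmaxpos.le _) (abs_nonneg _)
      · filter_upwards [ae_restrict_mem hΩm] with z hz
        rw [mul_comm]
        exact mul_le_mul_of_nonneg_left (hTlb y hy z hz) (abs_nonneg _)
    have h2 : ∫ z in Ω, Tmax ^ (1 - σ) * |lam z| = Tmax ^ (1 - σ) * ∫ z in Ω, |lam z| :=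
      integral_const_mul _ _
    have h3 : Tmax ^ (1 - σ) * (Λ - b) ≤ Tmax ^ (1 - σ) * ∫ z in Ω, |lam z| :=
      mul_le_mul_of_nonneg_left h₁ (Real.rpow_nonneg hTmaxpos.le _)
    rw [h2] at h1
    linarith
  -- bound on G^{σ-1}
  have hne1 : (1:ℝ) - σ ≠ 0 := by linarith
  have hG : ∀ y ∈ Ω, priceIndex Ω F σ T lam y ^ (σ - 1) ≤ F * Tmax ^ (σ - 1) / (Λ - b) := by
    intro y hy
    set A : ℝ := ∫ z in Ω, |lam z| * T y z ^ (1 - σ) with hAdef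
    have hAlb : Tmax ^ (1 - σ) * (Λ - b) ≤ A := hA y hy
    have hApos : 0 < A :=
      lt_of_lt_of_le (mul_pos (Real.rpow_pos_of_pos hTmaxpos _) hΛb) hAlb
    have hBpos : 0 < (1 / F) * A := mul_pos (by positivity) hApos
    have key : priceIndex Ω F σ T lam y ^ (σ - 1) = ((1 / F) * A)⁻¹ := by
      have h0 : priceIndex Ω F σ T lam y = ((1 / F) * A) ^ (1 / (1 - σ)) := rfl
      rw [h0, ← Real.rpow_mul hBpos.le,
        show (1 / (1 - σ)) * (σ - 1) = -1 by field_simp; ring, Real.rpow_neg_one]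
    rw [key]
    have hAinv : A⁻¹ ≤ (Tmax ^ (1 - σ) * (Λ - b))⁻¹ :=
      inv_anti₀ (mul_pos (Real.rpow_pos_of_pos hTmaxpos _) hΛb) hAlb
    have heq : (Tmax ^ (1 - σ) * (Λ - b))⁻¹ = Tmax ^ (σ - 1) / (Λ - b) := by
      rw [show (1:ℝ) - σ = -(σ - 1) by ring, Real.rpow_neg hTmaxpos.le]
      field_simp
    have hstep : ((1 / F) * A)⁻¹ = F * A⁻¹ := by
      rw [mul_inv, one_div, inv_inv]
    rw [hstep]
    calc F * A⁻¹ ≤ F * (Tmax ^ (σ - 1) / (Λ - b)) := by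
          exact mul_le_mul_of_nonneg_left (heq ▸ hAinv) hF.le
      _ = F * Tmax ^ (σ - 1) / (Λ - b) := by ring
  -- nonnegativity of G^{σ-1}
  have hG0 : ∀ y ∈ Ω, 0 ≤ priceIndex Ω F σ T lam y ^ (σ - 1) := fun y hy =>
    Real.rpow_nonneg (Real.rpow_nonneg (mul_nonneg (by positivity)
      (setIntegral_nonneg hΩm (fun z hz => mul_nonneg (abs_nonneg _)
        (Real.rpow_nonneg (le_trans hTminpos.le (hT y hy z hz).1) _)))) _) _
  -- integrability of W * |lam|
  have hWlam : IntegrableOn (fun y => W y * |lam y|) Ω := by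
    refine Integrable.mono (hlam1.const_mul M)
      ((hWc.aestronglyMeasurable hΩm).mul hlam1.aestronglyMeasurable) ?_
    filter_upwards [ae_restrict_mem hΩm] with y hy
    rw [Real.norm_eq_abs, Real.norm_eq_abs, abs_mul, abs_abs, abs_of_nonneg (hW0 y hy)]
    exact le_trans (mul_le_mul_of_nonneg_right (hWle y hy) (abs_nonneg _)) (le_abs_self _)
  have hWφ : IntegrableOn (fun y => W y * |lam y| + φ y) Ω := hWlam.add hφint
  set c : ℝ := F * Tmax ^ (σ - 1) / (Λ - b) * Tmin ^ (1 - σ) with hcdef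
  have hcpos : 0 < c := by positivity
  -- main integral bound
  have hmain : (∫ y in Ω, (W y * |lam y| + φ y) * priceIndex Ω F σ T lam y ^ (σ - 1)
      * T x₀ y ^ (1 - σ)) ≤ ∫ y in Ω, (W y * |lam y| + φ y) * c := by
    refine integral_mono_of_nonneg ?_ (hWφ.mul_const c) ?_
    · filter_upwards [ae_restrict_mem hΩm, hφ0] with y hy hφy
      have h1 : 0 ≤ W y * |lam y| + φ y :=
        add_nonneg (mul_nonneg (hW0 y hy) (abs_nonneg _)) hφy
      exact mul_nonneg (mul_nonneg h1 (hG0 y hy)) (hTpos' x₀ hx₀ y hy)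
    · filter_upwards [ae_restrict_mem hΩm, hφ0] with y hy hφy
      have h1 : 0 ≤ W y * |lam y| + φ y :=
        add_nonneg (mul_nonneg (hW0 y hy) (abs_nonneg _)) hφy
      have h2 : (W y * |lam y| + φ y) * priceIndex Ω F σ T lam y ^ (σ - 1)
          ≤ (W y * |lam y| + φ y) * (F * Tmax ^ (σ - 1) / (Λ - b)) :=
        mul_le_mul_of_nonneg_left (hG y hy) h1
      calc (W y * |lam y| + φ y) * priceIndex Ω F σ T lam y ^ (σ - 1) * T x₀ y ^ (1 - σ)
          ≤ (W y * |lam y| + φ y) * (F * Tmax ^ (σ - 1) / (Λ - b)) * Tmin ^ (1 - σ) := by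
            apply mul_le_mul h2 (hTub x₀ hx₀ y hy) (hTpos' x₀ hx₀ y hy)
            exact mul_nonneg h1 (by positivity)
        _ = (W y * |lam y| + φ y) * c := by rw [hcdef]; ring
  -- compute RHS integral
  have hsplit : (∫ y in Ω, (W y * |lam y| + φ y) * c)
      = ((∫ y in Ω, W y * |lam y|) + Φ) * c := by
    rw [integral_mul_const, integral_add hWlam hφint, hφΦ]
  have hWlamle : (∫ y in Ω, W y * |lam y|) ≤ M * (Λ + b) := by
    have h1 : (∫ y in Ω, W y * |lam y|) ≤ ∫ y in Ω, M * |lam y| := by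
      refine integral_mono_of_nonneg ?_ (hlam1.const_mul M) ?_
      · filter_upwards [ae_restrict_mem hΩm] with y hy
        exact mul_nonneg (hW0 y hy) (abs_nonneg _)
      · filter_upwards [ae_restrict_mem hΩm] with y hy
        exact mul_le_mul_of_nonneg_right (hWle y hy) (abs_nonneg _)
    rw [integral_const_mul] at h1
    exact h1.trans (mul_le_mul_of_nonneg_left h₂ hM0)
  -- combine
  have hμσF : 0 < μ / (σ * F) := div_pos hμ.1 (mul_pos hσ0 hF)
  have hMle : M ≤ μ / (σ * F) * ((M * (Λ + b) + Φ) * c) := by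
    have h0 : M = μ / (σ * F) * ∫ y in Ω, (W y * |lam y| + φ y)
        * priceIndex Ω F σ T lam y ^ (σ - 1) * T x₀ y ^ (1 - σ) := by
      rw [← hMeq]; exact hWeq x₀ hx₀
    have hint : (∫ y in Ω, (W y * |lam y| + φ y)
        * priceIndex Ω F σ T lam y ^ (σ - 1) * T x₀ y ^ (1 - σ))
        ≤ (M * (Λ + b) + Φ) * c := by
      refine hmain.trans ?_
      rw [hsplit]
      apply mul_le_mul_of_nonneg_right _ hcpos.le
      linarith
    calc M = μ / (σ * F) * ∫ y in Ω, (W y * |lam y| + φ y)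
          * priceIndex Ω F σ T lam y ^ (σ - 1) * T x₀ y ^ (1 - σ) := h0
      _ ≤ μ / (σ * F) * ((M * (Λ + b) + Φ) * c) :=
          mul_le_mul_of_nonneg_left hint hμσF.le
  have hdivp : (Tmax / Tmin) ^ (σ - 1) = Tmax ^ (σ - 1) * Tmin ^ (1 - σ) := by
    rw [Real.div_rpow hTmaxpos.le hTminpos.le, show (1:ℝ) - σ = -(σ - 1) by ring,
      Real.rpow_neg hTminpos.le, div_eq_mul_inv]
  have hident : μ / (σ * F) * ((M * (Λ + b) + Φ) * c)
      = κ * ((Λ + b) / (Λ - b)) * M + κ * (Φ / (Λ - b)) := by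
    rw [hcdef, hκdef, hdivp]
    field_simp
  rw [hident] at hMle
  have hD : 0 < 1 - κ * ((Λ + b) / (Λ - b)) := by linarith
  rw [le_div_iff₀ hD]
  nlinarith [hMle, hM0, hD]
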